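/- Let γ be a real number with 3 < γ < 4. Then for every integer q ≥ 1: q^{γ−2} · ∑_{s=1}^∞ ∑_{j = s·q + 1}^∞ (j − s·q)^{−4} · j^{−(γ−1)} ≤ ζ(4) · ζ(γ−1) / q, where ζ(t) = ∑_{n=1}^∞ n^{−t}; in particular the double series converges. -/

import Mathlib

open Function

/-- The term `(j − sq)⁻⁴ j^{−(γ−1)}` of the double sum over `j > sq`
(here `s ≥ 1` is encoded as `s + 1` with `s : ℕ`). -/
noncomputable def termII (γ : ℝ) (q s j : ℕ) : ℝ :=
  if (s + 1) * q < j then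
    ((j : ℝ) - (((s + 1) * q : ℕ) : ℝ)) ^ (-(4 : ℝ)) * (j : ℝ) ^ (-(γ - 1))
  else 0

/-- Shifted powers are summable for exponent `> 1`. -/
lemma aux_summable {x : ℝ} (hx : 1 < x) :
    Summable (fun n : ℕ => ((n : ℝ) + 1) ^ (-x)) := by
  have h0 : Summable (fun n : ℕ => (n : ℝ) ^ (-x)) :=
    Real.summable_nat_rpow.mpr (by linarith)
  have h1 := (summable_nat_add_iff 1).mpr h0
  convert h1 using 2 with n
  · rfl
  push_cast
  ring_nf

noncomputable def hfun (m j : ℕ) : ℝ :=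
  if m < j then ((j : ℝ) - (m : ℝ)) ^ (-(4 : ℝ)) else 0

lemma hfun_comp (m : ℕ) :
    (fun k : ℕ => hfun m (m + 1 + k)) = fun k : ℕ => ((k : ℝ) + 1) ^ (-(4 : ℝ)) := by
  funext k
  have : m < m + 1 + k := by omega
  simp only [hfun, if_pos this]
  congr 1
  push_cast
  ring

lemma hfun_inj (m : ℕ) : Injective (fun k : ℕ => m + 1 + k) := fun a b h => by
  simp only at h; omega

lemma hfun_vanish (m : ℕ) : ∀ j ∉ Set.range (fun k : ℕ => m + 1 + k), hfun m j = 0 := by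
  intro j hj
  have : ¬ m < j := by
    intro h
    exact hj ⟨j - (m + 1), show m + 1 + (j - (m + 1)) = j by omega⟩
  simp [hfun, this]

lemma hfun_summable (m : ℕ) : Summable (hfun m) := by
  rw [← (hfun_inj m).summable_iff (hfun_vanish m)]
  have : (hfun m ∘ fun k : ℕ => m + 1 + k) = fun k : ℕ => ((k : ℝ) + 1) ^ (-(4 : ℝ)) :=
    hfun_comp m
  rw [this]
  exact aux_summable (by norm_num)

lemma hfun_tsum (m : ℕ) : ∑' j : ℕ, hfun m j = ∑' n : ℕ, ((n : ℝ) + 1) ^ (-(4 : ℝ)) := by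
  rw [← (hfun_inj m).tsum_eq (fun x hx => by by_contra h; exact hx (hfun_vanish m x h))]
  exact congrArg tsum (hfun_comp m)

/-- Estimate of term II: for `3 < γ < 4` and every `q ≥ 1`,
`q^{γ−2} ∑_{s≥1} ∑_{j>sq} (j−sq)⁻⁴ j^{−(γ−1)} ≤ ζ(4) ζ(γ−1) / q`;
in particular the double series converges. -/
theorem term_II_estimate
    (γ : ℝ) (hγ1 : 3 < γ) (hγ2 : γ < 4) :
    ∀ q : ℕ, 1 ≤ q →
      (∀ s : ℕ, Summable (fun j : ℕ => termII γ q s j)) ∧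
      Summable (fun s : ℕ => ∑' j : ℕ, termII γ q s j) ∧
      (q : ℝ) ^ (γ - 2) * (∑' s : ℕ, ∑' j : ℕ, termII γ q s j) ≤
        (∑' n : ℕ, ((n : ℝ) + 1) ^ (-(4 : ℝ))) *
          (∑' n : ℕ, ((n : ℝ) + 1) ^ (-(γ - 1))) / (q : ℝ) := by
  intro q hq
  have hq0 : (0 : ℝ) < (q : ℝ) := by exact_mod_cast hq
  set Z4 : ℝ := ∑' n : ℕ, ((n : ℝ) + 1) ^ (-(4 : ℝ)) with hZ4
  set Zg : ℝ := ∑' n : ℕ, ((n : ℝ) + 1) ^ (-(γ - 1)) with hZg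
  have hs4 : Summable (fun n : ℕ => ((n : ℝ) + 1) ^ (-(4 : ℝ))) :=
    aux_summable (by norm_num)
  have hsg : Summable (fun n : ℕ => ((n : ℝ) + 1) ^ (-(γ - 1))) :=
    aux_summable (by linarith)
  have hZ4_nonneg : 0 ≤ Z4 := tsum_nonneg fun n => by positivity
  have hterm_nonneg : ∀ s j, 0 ≤ termII γ q s j := by
    intro s j; unfold termII; split_ifs with h
    · have hjm : ((((s + 1) * q : ℕ)) : ℝ) < (j : ℝ) := by exact_mod_cast h
      exact mul_nonneg (Real.rpow_nonneg (sub_nonneg.mpr hjm.le) _) (Real.rpow_nonneg (Nat.cast_nonneg j) _)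
    · exact le_refl 0
  -- pointwise bound
  have hm_pos : ∀ s : ℕ, (0 : ℝ) < (((s + 1) * q : ℕ) : ℝ) := by
    intro s
    have : 1 ≤ (s + 1) * q := Nat.one_le_iff_ne_zero.mpr (Nat.mul_ne_zero (by omega) (by omega))
    exact_mod_cast this
  have key : ∀ s j : ℕ,
      termII γ q s j ≤ (((s + 1) * q : ℕ) : ℝ) ^ (-(γ - 1)) * hfun ((s + 1) * q) j := by
    intro s j
    unfold termII hfun
    by_cases h : (s + 1) * q < j
    · simp only [if_pos h]
      rw [mul_comm ((((s + 1) * q : ℕ) : ℝ) ^ (-(γ - 1)))]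
      have hjm : (((s + 1) * q : ℕ) : ℝ) < (j : ℝ) := by exact_mod_cast h
      have h2 : (j : ℝ) ^ (-(γ - 1)) ≤ (((s + 1) * q : ℕ) : ℝ) ^ (-(γ - 1)) :=
        Real.rpow_le_rpow_of_nonpos (hm_pos s) (by exact_mod_cast h.le) (by linarith)
      exact mul_le_mul_of_nonneg_left h2 (Real.rpow_nonneg (sub_nonneg.mpr hjm.le) _)
    · simp [if_neg h]
  have hsum_h : ∀ s : ℕ,
      Summable (fun j => (((s + 1) * q : ℕ) : ℝ) ^ (-(γ - 1)) * hfun ((s + 1) * q) j) :=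
    fun s => (hfun_summable _).mul_left _
  have hsum_inner : ∀ s : ℕ, Summable (fun j : ℕ => termII γ q s j) := by
    intro s
    exact Summable.of_nonneg_of_le (hterm_nonneg s) (key s) (hsum_h s)
  -- bound the inner sums
  have hF_le : ∀ s : ℕ,
      (∑' j : ℕ, termII γ q s j) ≤
        ((s : ℝ) + 1) ^ (-(γ - 1)) * ((q : ℝ) ^ (-(γ - 1)) * Z4) := by
    intro s
    have h1 : (∑' j : ℕ, termII γ q s j) ≤
        ∑' j : ℕ, (((s + 1) * q : ℕ) : ℝ) ^ (-(γ - 1)) * hfun ((s + 1) * q) j :=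
      Summable.tsum_le_tsum (key s) (hsum_inner s) (hsum_h s)
    rw [tsum_mul_left, hfun_tsum] at h1
    refine h1.trans_eq ?_
    have hcast : (((s + 1) * q : ℕ) : ℝ) = ((s : ℝ) + 1) * (q : ℝ) := by push_cast; ring
    rw [hcast, Real.mul_rpow (by positivity) (by positivity)]
    ring
  have hF_nonneg : ∀ s : ℕ, 0 ≤ ∑' j : ℕ, termII γ q s j :=
    fun s => tsum_nonneg fun j => hterm_nonneg s j
  have hsum_g : Summable (fun s : ℕ =>
      ((s : ℝ) + 1) ^ (-(γ - 1)) * ((q : ℝ) ^ (-(γ - 1)) * Z4)) :=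
    hsg.mul_right _
  have hsum_outer : Summable (fun s : ℕ => ∑' j : ℕ, termII γ q s j) :=
    Summable.of_nonneg_of_le hF_nonneg hF_le hsum_g
  refine ⟨hsum_inner, hsum_outer, ?_⟩
  have htsum_le : (∑' s : ℕ, ∑' j : ℕ, termII γ q s j) ≤
      Zg * ((q : ℝ) ^ (-(γ - 1)) * Z4) := by
    have := Summable.tsum_le_tsum hF_le hsum_outer hsum_g
    rwa [tsum_mul_right] at this
  have hqpow : (0 : ℝ) < (q : ℝ) ^ (γ - 2) := Real.rpow_pos_of_pos hq0 _
  calc (q : ℝ) ^ (γ - 2) * (∑' s : ℕ, ∑' j : ℕ, termII γ q s j)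
      ≤ (q : ℝ) ^ (γ - 2) * (Zg * ((q : ℝ) ^ (-(γ - 1)) * Z4)) :=
        mul_le_mul_of_nonneg_left htsum_le hqpow.le
    _ = Z4 * Zg / (q : ℝ) := by
        rw [show (q : ℝ) ^ (γ - 2) * (Zg * ((q : ℝ) ^ (-(γ - 1)) * Z4)) =
          ((q : ℝ) ^ (γ - 2) * (q : ℝ) ^ (-(γ - 1))) * (Z4 * Zg) by ring,
          ← Real.rpow_add hq0]
        norm_num
        rw [Real.rpow_neg_one]
        ring
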